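/- arXiv:2303.16700 — 2 statements merged into one kernel-verified Lean document; each statement's English description precedes it below -/
import Mathlib

section
/- If P is a set of 5 points in general position in the plane, then the disjointness graph D(P) is not Hamiltonian. -/
noncomputable section

/-- Points of the plane. -/
abbrev Pl := ℝ × ℝ

/-- `P` is in general position: no three (distinct) points of `P` are collinear. -/
def GenPos (P : Set Pl) : Prop :=
  ∀ a ∈ P, ∀ b ∈ P, ∀ c ∈ P, a ≠ b → a ≠ c → b ≠ c →
    ¬ Collinear ℝ ({a, b, c} : Set Pl)

/-- The set of all closed straight-line segments with (distinct) endpoints in `P`. -/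
def Segs (P : Set Pl) : Set (Set Pl) :=
  {s | ∃ a ∈ P, ∃ b ∈ P, a ≠ b ∧ s = segment ℝ a b}

/-- The edge disjointness graph of `P`: vertices are the segments of `P`,
two of them adjacent iff they are disjoint. -/
def DisjGraph (P : Set Pl) : SimpleGraph ↥(Segs P) where
  Adj s t := Disjoint (s : Set Pl) (t : Set Pl)
  symm := ⟨fun _ _ h => h.symm⟩
  loopless := by
    refine ⟨?_⟩
    rintro ⟨s, a, ha, b, hb, hab, rfl⟩ h
    exact (Set.not_disjoint_iff.2
      ⟨a, left_mem_segment ℝ a b, left_mem_segment ℝ a b⟩) h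

/-- An independent set of vertices: pairwise non-adjacent. -/
def IsIndepSet {V : Type*} (G : SimpleGraph V) (s : Set V) : Prop :=
  s.Pairwise fun a b => ¬ G.Adj a b

/-- Twice the signed area of the triangle `a b c`; its sign is the orientation. -/
def det3 (a b c : Pl) : ℝ :=
  (b.1 - a.1) * (c.2 - a.2) - (b.2 - a.2) * (c.1 - a.1)

/-- `p 0, …, p (n-1)` are in convex position, appearing in this
(counterclockwise) cyclic order on their convex hull. -/
def ConvexCyclic {n : ℕ} (p : Fin n → Pl) : Prop :=
  ∀ i j k : Fin n, i < j → j < k → 0 < det3 (p i) (p j) (p k)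

/-- `P` is in convex position: every point of `P` is a vertex of the convex hull. -/
def ConvexPos (P : Set Pl) : Prop :=
  ∀ x ∈ P, x ∉ convexHull ℝ (P \ {x})

/-- `P` and `Q` have the same order type. -/
def SameOrderType (P Q : Set Pl) : Prop :=
  ∃ γ : Pl → Pl, Set.BijOn γ P Q ∧
    ∀ a ∈ P, ∀ b ∈ P, ∀ c ∈ P,
      Real.sign (det3 a b c) = Real.sign (det3 (γ a) (γ b) (γ c))

/-- A thrackle of `P`: a set of segments of `P`, any two of which intersect. -/
def IsThrackle (P : Set Pl) (T : Set (Set Pl)) : Prop :=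
  T ⊆ Segs P ∧ ∀ s ∈ T, ∀ t ∈ T, s ≠ t → ¬ Disjoint s t

end

namespace PetAux

/-- endpoint pair of vertex i of the Petersen graph -/
def pairs : Fin 10 → ℕ × ℕ := fun i =>
  match i.val with
  | 0 => (0,1) | 1 => (0,2) | 2 => (0,3) | 3 => (0,4)
  | 4 => (1,2) | 5 => (1,3) | 6 => (1,4)
  | 7 => (2,3) | 8 => (2,4)
  | _ => (3,4)

def petAdj (i j : Fin 10) : Bool :=
  let p := pairs i; let q := pairs j
  p.1 ≠ q.1 && p.1 ≠ q.2 && p.2 ≠ q.1 && p.2 ≠ q.2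

def enc (i j : Fin 5) : Fin 10 :=
  ⟨(min i.val j.val * (9 - min i.val j.val) / 2 + max i.val j.val - min i.val j.val - 1) % 10,
    Nat.mod_lt _ (by norm_num)⟩

theorem enc_comm : ∀ i j : Fin 5, enc i j = enc j i := by decide

theorem enc_inj : ∀ i j k l : Fin 5, i ≠ j → k ≠ l → enc i j = enc k l →
    (i = k ∧ j = l) ∨ (i = l ∧ j = k) := by decide

theorem enc_adj : ∀ i j k l : Fin 5, i ≠ j ∧ k ≠ l ∧ i ≠ k ∧ i ≠ l ∧ j ≠ k ∧ j ≠ l →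
    petAdj (enc i j) (enc k l) = true := by decide

theorem enc_surj : ∀ c : Fin 10, ∃ i j : Fin 5, i ≠ j ∧ enc i j = c := by decide

def Pet : SimpleGraph (Fin 10) where
  Adj i j := petAdj i j = true
  symm := by
    have : ∀ i j : Fin 10, petAdj i j = true → petAdj j i = true := by decide
    exact ⟨fun i j h => this i j h⟩
  loopless := by
    have : ∀ i : Fin 10, ¬ petAdj i i = true := by decide
    exact ⟨fun i h => this i h⟩

def extend (c : List (Fin 10)) : List (List (Fin 10)) :=
  match c with
  | [] => []
  | h :: _ => ((List.finRange 10).filter (fun w => petAdj w h && !(c.contains w))).map (· :: c)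

def chains : ℕ → List (List (Fin 10))
  | 0 => (List.finRange 10).map (fun v => [v])
  | n + 1 => (chains n).flatMap extend

theorem chains_complete : ∀ (n : ℕ) (l : List (Fin 10)),
    l.Chain' (fun a b => petAdj a b = true) → l.Nodup → l.length = n + 1 → l ∈ chains n := by
  intro n
  induction n with
  | zero =>
    intro l _ _ hlen
    match l, hlen with
    | [v], _ => simp [chains]
  | succ n ih =>
    intro l hc hn hlen
    match l, hlen with
    | w :: (h :: t), hlen =>
      have hc' : (h :: t).Chain' (fun a b => petAdj a b = true) := hc.tail
      have hmem : (h :: t) ∈ chains n := ih _ hc' hn.of_cons (by simpa using hlen)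
      rw [chains, List.mem_flatMap]
      refine ⟨h :: t, hmem, ?_⟩
      rw [extend, List.mem_map]
      refine ⟨w, List.mem_filter.2 ⟨List.mem_finRange w, ?_⟩, rfl⟩
      have h1 : petAdj w h = true := (List.isChain_cons_cons.mp hc).1
      have h2 : w ∉ h :: t := (List.nodup_cons.mp hn).1
      simp [h1, h2]

set_option maxRecDepth 100000 in
theorem final_check :
    (chains 9).all (fun c => !(petAdj (c.getLastD 0) (c.headD 0))) = true := by decide

theorem no_closed_chain (l : List (Fin 10)) (hc : l.Chain' (fun a b => petAdj a b = true))
    (hn : l.Nodup) (hlen : l.length = 10) :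
    ¬ (petAdj (l.getLastD 0) (l.headD 0) = true) := by
  have hm := chains_complete 9 l hc hn hlen
  have := List.all_eq_true.mp final_check l hm
  simpa using this

theorem pet_not_ham (a : Fin 10) (q : SimpleGraph.Walk Pet a a) (hq : q.IsHamiltonianCycle) : False := by
  classical
  have hnil := hq.isCycle.not_nil
  set t := q.support.tail with ht
  have hcount : ∀ x, t.count x = 1 := by
    intro x
    have := hq.isHamiltonian_tail x
    rwa [SimpleGraph.Walk.support_tail_of_not_nil q hnil] at this
  have hnodup : t.Nodup := List.nodup_iff_count_le_one.2 (fun x => le_of_eq (hcount x))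
  have hmemall : ∀ x, x ∈ t := fun x => List.count_pos_iff.1 (by rw [hcount x]; norm_num)
  have hlen : t.length = 10 := by
    have h1 : t.toFinset = Finset.univ := Finset.eq_univ_iff_forall.2 (by simpa using hmemall)
    have h2 := congrArg Finset.card h1
    rwa [List.toFinset_card_of_nodup hnodup, Finset.card_univ, Fintype.card_fin] at h2
  have hsupp : q.support = a :: t := q.support_eq_cons
  have hchain : q.support.Chain' Pet.Adj := q.isChain_adj_support
  rw [hsupp] at hchain
  match t, hlen, hnodup, hchain with
  | h :: t', hlen, hnodup, hchain =>
    have hadj : Pet.Adj a h := (List.isChain_cons_cons.mp hchain).1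
    have hc' : (h :: t').Chain' (fun x y => petAdj x y = true) := hchain.tail
    have h0 : q.support.getLast? = some a := by
      rw [List.getLast?_eq_getLast q.support_ne_nil, q.getLast_support]
    rw [hsupp, List.getLast?_cons_cons] at h0
    have hlast : (h :: t').getLastD 0 = a := by
      rw [List.getLastD_eq_getLast?, h0]; rfl
    exact no_closed_chain (h :: t') hc' hnodup (by simpa using hlen)
      (by rw [hlast]; exact hadj)

end PetAux

theorem seg_endpoints {P : Set Pl} (hgp : GenPos P) {a b c d : Pl}
    (ha : a ∈ P) (hb : b ∈ P) (hc : c ∈ P) (hd : d ∈ P)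
    (hab : a ≠ b) (hcd : c ≠ d) (h : segment ℝ a b = segment ℝ c d) :
    (a = c ∧ b = d) ∨ (a = d ∧ b = c) := by
  have key : ∀ x ∈ P, x ∈ segment ℝ a b → x = a ∨ x = b := by
    intro x hxP hx
    by_contra hcon
    push_neg at hcon
    obtain ⟨hxa, hxb⟩ := hcon
    have hspan : x ∈ affineSpan ℝ ({a, b} : Set Pl) := by
      have : x ∈ convexHull ℝ ({a, b} : Set Pl) := by
        rwa [convexHull_pair]
      exact convexHull_subset_affineSpan _ this
    have hcol : Collinear ℝ ({x, a, b} : Set Pl) :=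
      collinear_insert_of_mem_affineSpan_pair hspan
    have hcol' : Collinear ℝ ({a, b, x} : Set Pl) := by
      apply hcol.subset
      intro y hy
      simp only [Set.mem_insert_iff, Set.mem_singleton_iff] at hy ⊢
      tauto
    exact hgp a ha b hb x hxP hab (Ne.symm hxa) (Ne.symm hxb) hcol'
  have hc' : c = a ∨ c = b := key c hc (h ▸ left_mem_segment ℝ c d)
  have hd' : d = a ∨ d = b := key d hd (h ▸ right_mem_segment ℝ c d)
  rcases hc' with rfl | rfl <;> rcases hd' with rfl | rfl
  · exact absurd rfl hcd
  · exact Or.inl ⟨rfl, rfl⟩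
  · exact Or.inr ⟨rfl, rfl⟩
  · exact absurd rfl hcd

/-- for 5 points in general position, `D(P)` is not hamiltonian. -/
theorem stmt_9 (P : Finset Pl) (h5 : P.card = 5) (hgp : GenPos ↑P)
    [Fintype ↥(Segs (↑P : Set Pl))] [DecidableEq ↥(Segs (↑P : Set Pl))] :
    ¬ (DisjGraph ↑P).IsHamiltonian := by
  classical
  intro hham
  have hcard5 : Fintype.card ↥((↑P : Set Pl)) = 5 := by
    rw [Fintype.card_congr (Equiv.subtypeEquivRight
      (fun x : Pl => (Finset.mem_coe : x ∈ (↑P : Set Pl) ↔ x ∈ P))),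
      Fintype.card_coe, h5]
  have e : ↥((↑P : Set Pl)) ≃ Fin 5 := Fintype.equivFinOfCardEq hcard5
  have hmem : ∀ s : ↥(Segs (↑P : Set Pl)), ∃ a, a ∈ (↑P : Set Pl) ∧ ∃ b, b ∈ (↑P : Set Pl) ∧
      a ≠ b ∧ (s : Set Pl) = segment ℝ a b := by
    intro s
    obtain ⟨a, ha, b, hb, hab, hseg⟩ := s.2
    exact ⟨a, ha, b, hb, hab, hseg⟩
  choose A hA B hB hAB hseg using hmem
  set φ : ↥(Segs (↑P : Set Pl)) → Fin 10 :=
    fun s => PetAux.enc (e ⟨A s, hA s⟩) (e ⟨B s, hB s⟩) with hφ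
  have eAB : ∀ s, e ⟨A s, hA s⟩ ≠ e ⟨B s, hB s⟩ :=
    fun s h => hAB s (congrArg Subtype.val (e.injective h))
  have hinj : Function.Injective φ := by
    intro s t h
    rcases PetAux.enc_inj _ _ _ _ (eAB s) (eAB t) h with ⟨h1, h2⟩ | ⟨h1, h2⟩
    · have hA' := congrArg Subtype.val (e.injective h1)
      have hB' := congrArg Subtype.val (e.injective h2)
      simp only at hA' hB'
      apply Subtype.ext
      rw [hseg s, hseg t, hA', hB']
    · have hA' := congrArg Subtype.val (e.injective h1)
      have hB' := congrArg Subtype.val (e.injective h2)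
      simp only at hA' hB'
      apply Subtype.ext
      rw [hseg s, hseg t, hA', hB', segment_symm]
  have hmemA : ∀ s : ↥(Segs (↑P : Set Pl)), A s ∈ (s : Set Pl) := fun s => by
    rw [hseg s]; exact left_mem_segment ℝ _ _
  have hmemB : ∀ s : ↥(Segs (↑P : Set Pl)), B s ∈ (s : Set Pl) := fun s => by
    rw [hseg s]; exact right_mem_segment ℝ _ _
  have hadj : ∀ s t, (DisjGraph (↑P : Set Pl)).Adj s t →
      PetAux.petAdj (φ s) (φ t) = true := by
    intro s t h
    have hdisj : Disjoint (s : Set Pl) (t : Set Pl) := h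
    have hAA : A s ≠ A t := fun hEq =>
      Set.disjoint_left.mp hdisj (hmemA s) (hEq ▸ hmemA t)
    have hABt : A s ≠ B t := fun hEq =>
      Set.disjoint_left.mp hdisj (hmemA s) (hEq ▸ hmemB t)
    have hBA : B s ≠ A t := fun hEq =>
      Set.disjoint_left.mp hdisj (hmemB s) (hEq ▸ hmemA t)
    have hBB : B s ≠ B t := fun hEq =>
      Set.disjoint_left.mp hdisj (hmemB s) (hEq ▸ hmemB t)
    exact PetAux.enc_adj _ _ _ _ ⟨eAB s, eAB t,
      fun hEq => hAA (congrArg Subtype.val (e.injective hEq)),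
      fun hEq => hABt (congrArg Subtype.val (e.injective hEq)),
      fun hEq => hBA (congrArg Subtype.val (e.injective hEq)),
      fun hEq => hBB (congrArg Subtype.val (e.injective hEq))⟩
  have hsurj : Function.Surjective φ := by
    intro c
    obtain ⟨i, j, hij, hc⟩ := PetAux.enc_surj c
    set x := e.symm i with hx
    set y := e.symm j with hy
    have hxy : (x : Pl) ≠ (y : Pl) := by
      intro hEq
      apply hij
      rw [← Equiv.apply_symm_apply e i, ← Equiv.apply_symm_apply e j]
      exact congrArg e (Subtype.ext hEq)
    refine ⟨⟨segment ℝ (x : Pl) (y : Pl), ⟨x, x.2, y, y.2, hxy, rfl⟩⟩, ?_⟩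
    set s : ↥(Segs (↑P : Set Pl)) :=
      ⟨segment ℝ (x : Pl) (y : Pl), ⟨x, x.2, y, y.2, hxy, rfl⟩⟩ with hs
    have h2 : segment ℝ (A s) (B s) = segment ℝ (x : Pl) (y : Pl) := (hseg s).symm
    rcases seg_endpoints hgp (hA s) (hB s) x.2 y.2 (hAB s) hxy h2 with ⟨h3, h4⟩ | ⟨h3, h4⟩
    · have e1 : e ⟨A s, hA s⟩ = i := by
        rw [show (⟨A s, hA s⟩ : ↥((↑P : Set Pl))) = x from Subtype.ext h3, hx,
          Equiv.apply_symm_apply]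
      have e2 : e ⟨B s, hB s⟩ = j := by
        rw [show (⟨B s, hB s⟩ : ↥((↑P : Set Pl))) = y from Subtype.ext h4, hy,
          Equiv.apply_symm_apply]
      rw [hφ]
      simp only
      rw [e1, e2, hc]
    · have e1 : e ⟨A s, hA s⟩ = j := by
        rw [show (⟨A s, hA s⟩ : ↥((↑P : Set Pl))) = y from Subtype.ext h3, hy,
          Equiv.apply_symm_apply]
      have e2 : e ⟨B s, hB s⟩ = i := by
        rw [show (⟨B s, hB s⟩ : ↥((↑P : Set Pl))) = x from Subtype.ext h4, hx,
          Equiv.apply_symm_apply]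
      rw [hφ]
      simp only
      rw [e1, e2, PetAux.enc_comm, hc]
  have hbij : Function.Bijective φ := ⟨hinj, hsurj⟩
  have hcard : Fintype.card ↥(Segs (↑P : Set Pl)) = 10 := by
    rw [← Fintype.card_fin 10]
    exact Fintype.card_of_bijective hbij
  obtain ⟨a, p, hp⟩ := hham (by rw [hcard]; norm_num)
  let hom : DisjGraph (↑P : Set Pl) →g PetAux.Pet := ⟨φ, fun h => hadj _ _ h⟩
  exact PetAux.pet_not_ham _ (p.map hom) (hp.map hbij)
end

section
/- Let P be 5 points in general position in the plane, let Q = {p₁,p₂,p₃,p₄} ⊆ P be in convex position in this cyclic order, and let p₅ be the remaining point. Then in D(P), the neighborhood of the diagonal p₁p₃ is a subset of {p₂p₅, p₄p₅}, and the neighborhood of the diagonal p₂p₄ is a subset of {p₁p₅, p₃p₅}. -/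
lemma segments_cross (a b c d : Pl) (h1 : 0 < det3 a b c) (h2 : 0 < det3 a b d)
    (h3 : 0 < det3 a c d) (h4 : 0 < det3 b c d) :
    ¬ Disjoint (segment ℝ a c) (segment ℝ b d) := by
  set S : ℝ := det3 a c d + det3 a b c with hS
  have hSpos : 0 < S := by positivity
  have hSne : S ≠ 0 := ne_of_gt hSpos
  have hST : S = det3 a b d + det3 b c d := by simp only [hS, det3]; ring
  have key : (det3 b c d / S) • a + (det3 a b d / S) • c
      = (det3 a c d / S) • b + (det3 a b c / S) • d := by
    apply Prod.ext <;>
      · simp only [Prod.fst_add, Prod.snd_add, Prod.smul_fst, Prod.smul_snd, smul_eq_mul,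
          hS, det3]
        field_simp
        ring
  refine Set.not_disjoint_iff.2 ⟨(det3 b c d / S) • a + (det3 a b d / S) • c, ?_, ?_⟩
  · exact ⟨det3 b c d / S, det3 a b d / S, by positivity, by positivity,
      by rw [← add_div, add_comm, ← hST, div_self hSne], rfl⟩
  · exact ⟨det3 a c d / S, det3 a b c / S, by positivity, by positivity,
      by rw [← add_div, div_self hSne], key.symm⟩

/-- with `Q = {a,b,c,d}` convex in this cyclic order and `e` the
fifth point, the neighborhood of `ac` in `D(P)` is contained in `{be, de}`, and
that of `bd` in `{ae, ce}`. -/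
theorem stmt_14 (a b c d e : Pl) (P : Set Pl) (hP : P = {a, b, c, d, e})
    (hcard : P.ncard = 5) (hgp : GenPos P) (hcc : ConvexCyclic ![a, b, c, d]) :
    (∀ s t : ↥(Segs P), s.val = segment ℝ a c → (DisjGraph P).Adj s t →
      (t.val = segment ℝ b e ∨ t.val = segment ℝ d e)) ∧
    (∀ s t : ↥(Segs P), s.val = segment ℝ b d → (DisjGraph P).Adj s t →
      (t.val = segment ℝ a e ∨ t.val = segment ℝ c e)) := by
  have h1 : 0 < det3 a b c := by simpa using hcc 0 1 2 (by decide) (by decide)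
  have h2 : 0 < det3 a b d := by simpa using hcc 0 1 3 (by decide) (by decide)
  have h3 : 0 < det3 a c d := by simpa using hcc 0 2 3 (by decide) (by decide)
  have h4 : 0 < det3 b c d := by simpa using hcc 1 2 3 (by decide) (by decide)
  have hcross := segments_cross a b c d h1 h2 h3 h4
  have hcross' : ¬ Disjoint (segment ℝ b d) (segment ℝ a c) := fun h => hcross h.symm
  have hcross2 : ¬ Disjoint (segment ℝ a c) (segment ℝ d b) := by rwa [segment_symm ℝ d b]
  have hcross2' : ¬ Disjoint (segment ℝ b d) (segment ℝ c a) := by rwa [segment_symm ℝ c a]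
  constructor
  · rintro s t hs hadj
    obtain ⟨x, hx, y, hy, hxy, hty⟩ := t.2
    have hdisj : Disjoint (segment ℝ a c) (segment ℝ x y) := by
      rw [← hs, ← hty]; exact hadj
    rw [hP] at hx hy
    simp only [Set.mem_insert_iff, Set.mem_singleton_iff] at hx hy
    rcases hx with h | h | h | h | h <;> rcases hy with h' | h' | h' | h' | h' <;>
        rw [h, h'] at hdisj hty hxy <;>
      first
      | exact absurd rfl hxy
      | exact absurd hdisj (Set.not_disjoint_iff.2
          ⟨a, left_mem_segment ℝ a c, left_mem_segment ℝ _ _⟩)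
      | exact absurd hdisj (Set.not_disjoint_iff.2
          ⟨a, left_mem_segment ℝ a c, right_mem_segment ℝ _ _⟩)
      | exact absurd hdisj (Set.not_disjoint_iff.2
          ⟨c, right_mem_segment ℝ a c, left_mem_segment ℝ _ _⟩)
      | exact absurd hdisj (Set.not_disjoint_iff.2
          ⟨c, right_mem_segment ℝ a c, right_mem_segment ℝ _ _⟩)
      | exact absurd hdisj hcross
      | exact absurd hdisj hcross2
      | exact Or.inl hty
      | exact Or.inr hty
      | exact Or.inl (hty.trans (segment_symm ℝ _ _))
      | exact Or.inr (hty.trans (segment_symm ℝ _ _))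
  · rintro s t hs hadj
    obtain ⟨x, hx, y, hy, hxy, hty⟩ := t.2
    have hdisj : Disjoint (segment ℝ b d) (segment ℝ x y) := by
      rw [← hs, ← hty]; exact hadj
    rw [hP] at hx hy
    simp only [Set.mem_insert_iff, Set.mem_singleton_iff] at hx hy
    rcases hx with h | h | h | h | h <;> rcases hy with h' | h' | h' | h' | h' <;>
        rw [h, h'] at hdisj hty hxy <;>
      first
      | exact absurd rfl hxy
      | exact absurd hdisj (Set.not_disjoint_iff.2
          ⟨b, left_mem_segment ℝ b d, left_mem_segment ℝ _ _⟩)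
      | exact absurd hdisj (Set.not_disjoint_iff.2
          ⟨b, left_mem_segment ℝ b d, right_mem_segment ℝ _ _⟩)
      | exact absurd hdisj (Set.not_disjoint_iff.2
          ⟨d, right_mem_segment ℝ b d, left_mem_segment ℝ _ _⟩)
      | exact absurd hdisj (Set.not_disjoint_iff.2
          ⟨d, right_mem_segment ℝ b d, right_mem_segment ℝ _ _⟩)
      | exact absurd hdisj hcross'
      | exact absurd hdisj hcross2'
      | exact Or.inl hty
      | exact Or.inr hty
      | exact Or.inl (hty.trans (segment_symm ℝ _ _))
      | exact Or.inr (hty.trans (segment_symm ℝ _ _))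
end
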